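/- Given points x₁,...,x_p ∈ 𝕃ⁿ and positive weights ν₁,...,ν_p, the weighted Fréchet mean with respect to the squared Lorentzian distance d²_𝕃(x,y) = -1 - ⟨x,y⟩_L, i.e., the minimizer over μ ∈ 𝕃ⁿ of Σⱼ νⱼ d²_𝕃(xⱼ, μ), is given in closed form by μ* = (Σⱼ νⱼ xⱼ)/|‖Σⱼ νⱼ xⱼ‖_L|. -/

import Mathlib

open Matrix BigOperators Real

noncomputable section

/-- Lorentzian inner product on ℝ^{n+1}. -/
def lprod {n : ℕ} (x y : Fin (n + 1) → ℝ) : ℝ :=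
  ∑ i, (if i = 0 then (-1 : ℝ) else 1) * x i * y i

/-- The hyperboloid model 𝕃ⁿ ⊂ ℝ^{n+1}. -/
def Hyp (n : ℕ) : Set (Fin (n + 1) → ℝ) := {x | lprod x x = -1 ∧ 0 < x 0}

/-- J = diag(-1, Iₙ). -/
def Jmat (n : ℕ) : Matrix (Fin (n + 1)) (Fin (n + 1)) ℝ :=
  Matrix.diagonal (fun i => if i = 0 then (-1 : ℝ) else 1)

/-- Inverse hyperbolic cosine. -/
def arcosh (t : ℝ) : ℝ := Real.log (t + Real.sqrt (t ^ 2 - 1))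

/-- Geodesic distance on the hyperboloid. -/
def dL {n : ℕ} (x y : Fin (n + 1) → ℝ) : ℝ := _root_.arcosh (-(lprod x y))

def Espace {n : ℕ} (x y : Fin (n + 1) → ℝ) : ℝ := ∑ i : Fin n, x i.succ * y i.succ

lemma lprod_eq {n : ℕ} (x y : Fin (n + 1) → ℝ) :
    lprod x y = -(x 0 * y 0) + Espace x y := by
  rw [lprod, Fin.sum_univ_succ]
  simp [Espace, Fin.succ_ne_zero]

lemma lprod_smul_left {n : ℕ} (a : ℝ) (x y : Fin (n + 1) → ℝ) :
    lprod (a • x) y = a * lprod x y := by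
  simp only [lprod, Finset.mul_sum, Pi.smul_apply, smul_eq_mul]
  congr 1; funext i; ring

lemma lprod_sum_left {n p : ℕ} (f : Fin p → (Fin (n + 1) → ℝ)) (y : Fin (n + 1) → ℝ) :
    lprod (∑ j, f j) y = ∑ j, lprod (f j) y := by
  simp only [lprod, Finset.sum_apply, Finset.sum_mul, Finset.mul_sum]
  exact Finset.sum_comm

lemma Espace_self_nonneg {n : ℕ} (x : Fin (n + 1) → ℝ) : 0 ≤ Espace x x :=
  Finset.sum_nonneg fun i _ => mul_self_nonneg _

lemma Espace_cs {n : ℕ} (x y : Fin (n + 1) → ℝ) :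
    (Espace x y) ^ 2 ≤ Espace x x * Espace y y := by
  have h := Finset.sum_mul_sq_le_sq_mul_sq Finset.univ
    (fun i : Fin n => x i.succ) (fun i : Fin n => y i.succ)
  simpa [Espace, sq] using h


lemma Espace_le_sqrt {n : ℕ} (x y : Fin (n + 1) → ℝ) :
    Espace x y ≤ Real.sqrt (Espace x x) * Real.sqrt (Espace y y) := by
  have h := Espace_cs x y
  calc Espace x y ≤ |Espace x y| := le_abs_self _
    _ = Real.sqrt ((Espace x y) ^ 2) := (Real.sqrt_sq_eq_abs _).symm
    _ ≤ Real.sqrt (Espace x x * Espace y y) := Real.sqrt_le_sqrt h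
    _ = Real.sqrt (Espace x x) * Real.sqrt (Espace y y) :=
        Real.sqrt_mul (Espace_self_nonneg x) _

/-- Purely numeric key inequality. -/
lemma key_ineq (a b c d e : ℝ) (hbn : 0 ≤ b) (hdn : 0 ≤ d) (ha : 0 < a) (hc : 0 < c)
    (hab : b ^ 2 < a ^ 2) (hcd : c ^ 2 - d ^ 2 = 1) (he : e ≤ b * d) :
    -(a * c) + e ≤ -Real.sqrt (a ^ 2 - b ^ 2) := by
  have hba : b < a := by nlinarith
  have hdc : d < c := by nlinarith
  have h2 : 0 ≤ a * c - b * d := by nlinarith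
  have h1 : a ^ 2 - b ^ 2 ≤ (a * c - b * d) ^ 2 := by nlinarith [sq_nonneg (a * d - b * c)]
  have hkey : Real.sqrt (a ^ 2 - b ^ 2) ≤ a * c - b * d :=
    calc Real.sqrt (a ^ 2 - b ^ 2) ≤ Real.sqrt ((a * c - b * d) ^ 2) := Real.sqrt_le_sqrt h1
      _ = a * c - b * d := Real.sqrt_sq h2
  linarith

/-- Reverse Cauchy-Schwarz: if s is future-pointing timelike and mu in Hyp,
then <s,mu> <= -sqrt(-<s,s>). -/
lemma revCS {n : ℕ} (s μ : Fin (n + 1) → ℝ) (hs : lprod s s < 0) (hs0 : 0 < s 0)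
    (hμ : μ ∈ Hyp n) : lprod s μ ≤ -Real.sqrt (-(lprod s s)) := by
  obtain ⟨hμ1, hμ0⟩ := hμ
  have hEss : 0 ≤ Espace s s := Espace_self_nonneg s
  have hEμμ : 0 ≤ Espace μ μ := Espace_self_nonneg μ
  have hb2 : Real.sqrt (Espace s s) ^ 2 = Espace s s := Real.sq_sqrt hEss
  have hd2 : Real.sqrt (Espace μ μ) ^ 2 = Espace μ μ := Real.sq_sqrt hEμμ
  have hss : lprod s s = -(s 0 * s 0) + Espace s s := lprod_eq s s
  have hμμ : lprod μ μ = -(μ 0 * μ 0) + Espace μ μ := lprod_eq μ μ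
  have hL : -(lprod s s) = s 0 ^ 2 - Real.sqrt (Espace s s) ^ 2 := by rw [hb2, hss]; ring
  have hab : Real.sqrt (Espace s s) ^ 2 < s 0 ^ 2 := by nlinarith
  have hcd : μ 0 ^ 2 - Real.sqrt (Espace μ μ) ^ 2 = 1 := by rw [hd2, hμ1] at *; nlinarith
  rw [lprod_eq, hL]
  exact key_ineq (s 0) _ (μ 0) _ _ (Real.sqrt_nonneg _) (Real.sqrt_nonneg _) hs0 hμ0
    hab hcd (Espace_le_sqrt s μ)

lemma lprod_symm {n : ℕ} (x y : Fin (n + 1) → ℝ) : lprod x y = lprod y x := by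
  unfold lprod; congr 1; funext i; ring

lemma lprod_smul_right {n : ℕ} (a : ℝ) (x y : Fin (n + 1) → ℝ) :
    lprod x (a • y) = a * lprod x y := by
  rw [lprod_symm, lprod_smul_left, lprod_symm]


/-- the weighted Fréchet mean w.r.t. the squared Lorentzian distance
d²_𝕃(x,y) = -1 - ⟨x,y⟩_L has the closed form (Σⱼ νⱼxⱼ)/|‖Σⱼ νⱼxⱼ‖_L|. -/
theorem frechet_mean_closed_form {n p : ℕ} (hp : 0 < p)
    (x : Fin p → (Fin (n + 1) → ℝ)) (hx : ∀ j, x j ∈ Hyp n)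
    (ν : Fin p → ℝ) (hν : ∀ j, 0 < ν j) :
    (Real.sqrt (-(lprod (∑ j, ν j • x j) (∑ j, ν j • x j))))⁻¹ • (∑ j, ν j • x j) ∈ Hyp n ∧
    (∀ μ ∈ Hyp n,
      ∑ j, ν j * (-1 - lprod (x j)
          ((Real.sqrt (-(lprod (∑ j, ν j • x j) (∑ j, ν j • x j))))⁻¹ • ∑ j, ν j • x j)) ≤
        ∑ j, ν j * (-1 - lprod (x j) μ)) := by
  have hne : (Finset.univ : Finset (Fin p)).Nonempty := Finset.univ_nonempty_iff.mpr
    ⟨⟨0, hp⟩⟩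
  set s : Fin (n + 1) → ℝ := ∑ j, ν j • x j with hsdef
  -- pairwise products ≤ -1
  have hpair : ∀ j k, lprod (x j) (x k) ≤ -1 := by
    intro j k
    have h := revCS (x j) (x k) (by rw [(hx j).1]; norm_num) (hx j).2 (hx k)
    rwa [(hx j).1, neg_neg, Real.sqrt_one] at h
  -- expansion of lprod s s
  have hexp : lprod s s = ∑ j, ∑ k, ν j * (ν k * lprod (x j) (x k)) := by
    rw [hsdef, lprod_sum_left]
    refine Finset.sum_congr rfl fun j _ => ?_
    rw [lprod_smul_left, lprod_symm, lprod_sum_left]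
    rw [Finset.mul_sum]
    refine Finset.sum_congr rfl fun k _ => ?_
    rw [lprod_smul_left, lprod_symm]
  have hss_neg : lprod s s < 0 := by
    rw [hexp]
    have hbound : ∀ j ∈ Finset.univ, ∑ k, ν j * (ν k * lprod (x j) (x k)) ≤
        ∑ k : Fin p, -(ν j * ν k) := by
      intro j _
      refine Finset.sum_le_sum fun k _ => ?_
      have h2 := mul_le_mul_of_nonneg_left (hpair j k) (le_of_lt (mul_pos (hν j) (hν k)))
      nlinarith
    calc (∑ j, ∑ k, ν j * (ν k * lprod (x j) (x k))) ≤ ∑ j, ∑ k : Fin p, -(ν j * ν k) :=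
          Finset.sum_le_sum hbound
      _ < 0 := by
          refine Finset.sum_neg (fun j _ => Finset.sum_neg (fun k _ => ?_) hne) hne
          have := hν j; have := hν k; nlinarith
  set r : ℝ := Real.sqrt (-(lprod s s)) with hrdef
  have hr_pos : 0 < r := Real.sqrt_pos.mpr (by linarith)
  have hr2 : r ^ 2 = -(lprod s s) := Real.sq_sqrt (by linarith)
  have hs0 : 0 < s 0 := by
    rw [hsdef]
    simp only [Finset.sum_apply, Pi.smul_apply, smul_eq_mul]
    exact Finset.sum_pos (fun j _ => mul_pos (hν j) (hx j).2) hne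
  have hmem : r⁻¹ • s ∈ Hyp n := by
    constructor
    · rw [lprod_smul_left, lprod_smul_right]
      field_simp
      nlinarith
    · simp only [Pi.smul_apply, smul_eq_mul]
      exact mul_pos (by positivity) hs0
  refine ⟨hmem, fun μ hμ => ?_⟩
  -- rewrite the objective
  have hobj : ∀ w : Fin (n + 1) → ℝ, ∑ j, ν j * (-1 - lprod (x j) w) =
      -(∑ j, ν j) - lprod s w := by
    intro w
    have h1 : lprod s w = ∑ j, ν j * lprod (x j) w := by
      rw [hsdef, lprod_sum_left]
      exact Finset.sum_congr rfl fun j _ => lprod_smul_left _ _ _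
    rw [h1]
    rw [← Finset.sum_neg_distrib, ← Finset.sum_sub_distrib]
    exact Finset.sum_congr rfl fun j _ => by ring
  have hstar : lprod s (r⁻¹ • s) = -r := by
    rw [lprod_smul_right]
    field_simp
    nlinarith
  have hle : lprod s μ ≤ -r := revCS s μ hss_neg hs0 hμ
  rw [hobj, hobj, hstar]
  linarith
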